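/- For m = 2, the corrected radius √(m² + m) equals √6, and consequently any point x in the intersection of two ellipsoids F satisfies (x - x̄)ᵀ∇²L(x̄)(x - x̄) ≤ 6, where x̄ is the analytic center of F. -/

import Mathlib

open Matrix

theorem cdt_dikin_bound (n : ℕ)
    (Q : Fin 2 → Matrix (Fin n) (Fin n) ℝ) (hQ : ∀ i, (Q i).PosSemidef)
    (c : Fin 2 → Fin n → ℝ) (d : Fin 2 → ℝ)
    (g : Fin 2 → (Fin n → ℝ) → ℝ)
    (hg : ∀ i x, g i x = d i - c i ⬝ᵥ x - (1/2) * x ⬝ᵥ (Q i).mulVec x)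
    (xbar : Fin n → ℝ) (hpos : ∀ i, 0 < g i xbar)
    (hcrit : ∑ i, (g i xbar)⁻¹ • (c i + (Q i).mulVec xbar) = 0)
    (x : Fin n → ℝ) (hx : ∀ i, 0 ≤ g i x) :
    Real.sqrt ((2 : ℝ) ^ 2 + 2) = Real.sqrt 6 ∧
    ∑ i, (((c i + (Q i).mulVec xbar) ⬝ᵥ (x - xbar)) ^ 2 / (g i xbar) ^ 2
        + (x - xbar) ⬝ᵥ (Q i).mulVec (x - xbar) / g i xbar)
      ≤ 6 := by
  refine ⟨by norm_num, ?_⟩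
  set h : Fin n → ℝ := x - xbar with hh
  have hxeq : x = xbar + h := by simp [hh]
  -- symmetry of Q i
  have hsym : ∀ i, (Q i)ᵀ = Q i := fun i => (hQ i).1
  -- PSD nonnegativity
  have hqnn : ∀ i, (0:ℝ) ≤ h ⬝ᵥ (Q i).mulVec h := by
    intro i
    have := (hQ i).dotProduct_mulVec_nonneg h
    simpa using this
  -- symmetry in dot products
  have hswap : ∀ i, h ⬝ᵥ (Q i).mulVec xbar = xbar ⬝ᵥ (Q i).mulVec h := by
    intro i
    rw [dotProduct_mulVec, ← mulVec_transpose, hsym, dotProduct_comm]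
  -- key expansion: g i x = g i xbar - a_i ⬝ h - (1/2) h Q h
  have hkey : ∀ i, (c i + (Q i).mulVec xbar) ⬝ᵥ h + (1/2) * (h ⬝ᵥ (Q i).mulVec h)
      ≤ g i xbar := by
    intro i
    have h0 := hx i
    rw [hg i x, hxeq] at h0
    rw [hg i xbar]
    simp only [mulVec_add, dotProduct_add, add_dotProduct] at h0 ⊢
    rw [hswap i] at h0
    have hsw2 : (Q i).mulVec xbar ⬝ᵥ h = xbar ⬝ᵥ (Q i).mulVec h := by
      rw [dotProduct_comm]; exact hswap i
    linarith
  -- criticality dotted with h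
  have hc : (g 0 xbar)⁻¹ * ((c 0 + (Q 0).mulVec xbar) ⬝ᵥ h)
      + (g 1 xbar)⁻¹ * ((c 1 + (Q 1).mulVec xbar) ⬝ᵥ h) = 0 := by
    have := congrArg (fun v => v ⬝ᵥ h) hcrit
    simp only [Fin.sum_univ_two, add_dotProduct, smul_dotProduct, smul_eq_mul,
      zero_dotProduct, mul_add] at this ⊢
    linarith
  rw [Fin.sum_univ_two]
  set s0 := g 0 xbar
  set s1 := g 1 xbar
  have hs0 : 0 < s0 := hpos 0
  have hs1 : 0 < s1 := hpos 1
  set A0 := (c 0 + (Q 0).mulVec xbar) ⬝ᵥ h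
  set A1 := (c 1 + (Q 1).mulVec xbar) ⬝ᵥ h
  set B0 := h ⬝ᵥ (Q 0).mulVec h
  set B1 := h ⬝ᵥ (Q 1).mulVec h
  have hk0 : A0 + 1/2 * B0 ≤ s0 := hkey 0
  have hk1 : A1 + 1/2 * B1 ≤ s1 := hkey 1
  have hb0 : (0:ℝ) ≤ B0 := hqnn 0
  have hb1 : (0:ℝ) ≤ B1 := hqnn 1
  -- normalized variables
  have hc' : A0 / s0 + A1 / s1 = 0 := by
    rw [div_add_div _ _ (ne_of_gt hs0) (ne_of_gt hs1)]
    field_simp at hc ⊢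
    linarith [hc]
  set t0 := A0 / s0 with ht0
  set t1 := A1 / s1 with ht1
  set u0 := B0 / s0 with hu0
  set u1 := B1 / s1 with hu1
  have hu0n : 0 ≤ u0 := div_nonneg hb0 hs0.le
  have hu1n : 0 ≤ u1 := div_nonneg hb1 hs1.le
  have hk0' : t0 + u0 / 2 ≤ 1 := by
    rw [ht0, hu0, show A0 / s0 + B0 / s0 / 2 = (A0 + 1/2 * B0) / s0 by ring,
      div_le_one hs0]
    linarith
  have hk1' : t1 + u1 / 2 ≤ 1 := by
    rw [ht1, hu1, show A1 / s1 + B1 / s1 / 2 = (A1 + 1/2 * B1) / s1 by ring,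
      div_le_one hs1]
    linarith
  have hgoal : A0 ^ 2 / s0 ^ 2 + B0 / s0 + (A1 ^ 2 / s1 ^ 2 + B1 / s1)
      = t0 ^ 2 + u0 + (t1 ^ 2 + u1) := by
    rw [ht0, ht1, hu0, hu1, div_pow, div_pow]
  rw [hgoal]
  nlinarith [mul_nonneg (by linarith : (0:ℝ) ≤ 1 - t0) (by linarith : (0:ℝ) ≤ 1 - t1),
    sq_nonneg (t0 + t1)]
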